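/- The braid monoid B(3)⁺ on 3 strands (the Artin monoid of type A₂, generated by a, b with relation aba = bab) is cancellative, homogeneous with respect to {a,b}, and any two elements admit a common right multiple; in particular the fundamental element Δ = aba satisfies: for every generator g ∈ {a,b}, g left-divides Δ and g right-divides Δ. -/

import Mathlib

/-- The braid relation `aba = bab` on the free monoid on two letters. -/
def braidRel : FreeMonoid (Fin 2) → FreeMonoid (Fin 2) → Prop := fun x y =>
  x = FreeMonoid.of 0 * FreeMonoid.of 1 * FreeMonoid.of 0 ∧
  y = FreeMonoid.of 1 * FreeMonoid.of 0 * FreeMonoid.of 1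

/-- The positive braid monoid `B(3)⁺ = ⟨a, b ∣ aba = bab⟩` on three strands. -/
def B3 : Type := (conGen braidRel).Quotient

instance : Monoid B3 := Con.monoid _

/-- The standard generators `a`, `b` of `B(3)⁺`. -/
def σ (i : Fin 2) : B3 := (conGen braidRel).mk' (FreeMonoid.of i)

namespace B3X

open Fin.NatCast Fin.CommRing

lemma rel : σ 0 * σ 1 * σ 0 = σ 1 * σ 0 * σ 1 := by
  have h : (conGen braidRel) (.of 0 * .of 1 * .of 0) (.of 1 * .of 0 * .of 1) :=
    ConGen.Rel.of _ _ ⟨rfl, rfl⟩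
  have h2 := (Con.eq (conGen braidRel)).mpr h
  exact h2

def Δ : B3 := σ 0 * σ 1 * σ 0

lemma relc : ∀ c : Fin 2, σ c * σ (c+1) * σ c = Δ := by
  intro c
  fin_cases c
  · rfl
  · exact (by simpa [Δ] using rel.symm)

/-- word to element -/
def dec (l : List (Fin 2)) : B3 := (l.map σ).prod

@[simp] lemma dec_nil : dec [] = 1 := rfl
@[simp] lemma dec_cons (g : Fin 2) (l : List (Fin 2)) : dec (g :: l) = σ g * dec l := by
  simp [dec]

lemma mk'_ofList (l : List (Fin 2)) :
    (conGen braidRel).mk' (FreeMonoid.ofList l) = dec l := by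
  induction l with
  | nil => simp [FreeMonoid.ofList]; rfl
  | cons g t ih =>
      have : FreeMonoid.ofList (g :: t) = FreeMonoid.of g * FreeMonoid.ofList t := rfl
      rw [this, map_mul, ih, dec_cons]; rfl

lemma repr (x : B3) : ∃ l : List (Fin 2), x = dec l := by
  induction x using Con.induction_on with
  | _ w => exact ⟨FreeMonoid.toList w, by rw [← mk'_ofList]; simp [FreeMonoid.ofList]; rfl⟩

lemma rel' : σ 0 * (σ 1 * σ 0) = σ 1 * (σ 0 * σ 1) := by
  simpa [mul_assoc] using rel

lemma genComm (g : Fin 2) : σ g * Δ = Δ * σ (g + 1) := by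
  fin_cases g
  · show σ 0 * Δ = Δ * σ 1
    simp only [Δ, mul_assoc]
    rw [rel']
  · show σ 1 * Δ = Δ * σ 0
    have h1 : Δ = σ 1 * (σ 0 * σ 1) := by simpa [Δ, mul_assoc] using rel
    rw [h1, mul_assoc, mul_assoc, rel']

lemma powComm (g : Fin 2) (t : ℕ) : σ g * Δ ^ t = Δ ^ t * σ (g + (t : Fin 2)) := by
  induction t generalizing g with
  | zero => simp
  | succ n ih =>
      have : Δ ^ (n+1) = Δ * Δ ^ n := by rw [pow_succ']
      rw [this, ← mul_assoc, genComm, mul_assoc, ih, ← mul_assoc]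
      congr 2
      push_cast
      ring

/-- the flip automorphism -/
def τ : B3 →* B3 :=
  (conGen braidRel).lift (FreeMonoid.lift (fun i => σ (i + 1)))
    ((Con.conGen_le).2 (by
      rintro x y ⟨rfl, rfl⟩
      rw [Con.ker_rel]
      simp only [map_mul, FreeMonoid.lift_eval_of]
      have h0 : (0 : Fin 2) + 1 = 1 := rfl
      have h1 : (1 : Fin 2) + 1 = 0 := rfl
      rw [h0, h1]
      exact rel.symm))

@[simp] lemma τ_σ (g : Fin 2) : τ (σ g) = σ (g + 1) := by
  show (conGen braidRel).lift _ _ ((conGen braidRel).mk' (FreeMonoid.of g)) = _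
  rw [Con.lift_mk', FreeMonoid.lift_eval_of]

@[simp] lemma τ_Δ : τ Δ = Δ := by
  have h : Δ = σ 0 * σ 1 * σ 0 := rfl
  have h0 : (0 : Fin 2) + 1 = 1 := rfl
  have h1 : (1 : Fin 2) + 1 = 0 := rfl
  rw [h]
  simp only [map_mul, τ_σ, h0, h1]
  exact rel.symm

lemma ττ (x : B3) : τ (τ x) = x := by
  obtain ⟨l, rfl⟩ := repr x
  induction l with
  | nil => simp
  | cons g w ih =>
      rw [dec_cons, map_mul, map_mul, τ_σ, τ_σ, ih]
      congr 1
      congr 1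
      fin_cases g <;> decide

lemma commτ (x : B3) : x * Δ = Δ * τ x := by
  obtain ⟨l, rfl⟩ := repr x
  induction l with
  | nil => simp
  | cons g w ih =>
      rw [dec_cons, mul_assoc, ih, ← mul_assoc, genComm g, mul_assoc, map_mul, τ_σ]

/-! ### The action on normal forms -/

/-- no factor `x y x` with `y ≠ x` -/
def Av : List (Fin 2) → Prop
  | x :: y :: z :: s => ¬(z = x ∧ y ≠ x) ∧ Av (y :: z :: s)
  | _ => True

@[simp] lemma av_nil : Av [] := trivial
@[simp] lemma av_single (x : Fin 2) : Av [x] := trivial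
@[simp] lemma av_pair (x y : Fin 2) : Av [x, y] := trivial
@[simp] lemma av_cons3 (x y z : Fin 2) (s : List (Fin 2)) :
    Av (x :: y :: z :: s) ↔ ¬(z = x ∧ y ≠ x) ∧ Av (y :: z :: s) := by
  rw [Av]

lemma av_tail {x : Fin 2} {l : List (Fin 2)} (h : Av (x :: l)) : Av l := by
  match l with
  | [] => trivial
  | [y] => trivial
  | y :: z :: s => exact (av_cons3 x y z s).mp h |>.2

/-- prepend `c`, absorbing a `Δ` if one is created -/
def pre (g : Fin 2) (p : ℕ × List (Fin 2)) : ℕ × List (Fin 2) :=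
  match p.2, g + (p.1 : Fin 2) with
  | x :: y :: s, c =>
      if x = c + 1 ∧ y = c then (p.1 + 1, s) else (p.1, c :: x :: y :: s)
  | l, c => (p.1, c :: l)

lemma pre_of_short (g : Fin 2) (t : ℕ) (l : List (Fin 2)) (h : l.length ≤ 1) :
    pre g (t, l) = (t, (g + (t : Fin 2)) :: l) := by
  match l with
  | [] => rfl
  | [x] => rfl
  | x :: y :: s => simp at h

lemma pre_hit (g : Fin 2) (t : ℕ) (s : List (Fin 2)) :
    pre g (t, (g + (t : Fin 2) + 1) :: (g + (t : Fin 2)) :: s) = (t + 1, s) := by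
  simp [pre]

lemma pre_miss (g : Fin 2) (t : ℕ) (x y : Fin 2) (s : List (Fin 2))
    (h : ¬(x = g + (t : Fin 2) + 1 ∧ y = g + (t : Fin 2))) :
    pre g (t, x :: y :: s) = (t, (g + (t : Fin 2)) :: x :: y :: s) := by
  simp [pre, h]

lemma pre_hit' {g : Fin 2} {t : ℕ} {c x y : Fin 2} (hc : g + (t : Fin 2) = c)
    (hx : x = c + 1) (hy : y = c) (s : List (Fin 2)) :
    pre g (t, x :: y :: s) = (t + 1, s) := by
  subst hc; subst hx; subst hy; simp [pre]

lemma pre_miss' {g : Fin 2} {t : ℕ} {c x y : Fin 2} (hc : g + (t : Fin 2) = c)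
    (hxy : ¬(x = c + 1 ∧ y = c)) (s : List (Fin 2)) :
    pre g (t, x :: y :: s) = (t, c :: x :: y :: s) := by
  subst hc; simp [pre, hxy]

lemma pre_short' {g : Fin 2} {t : ℕ} {c : Fin 2} (hc : g + (t : Fin 2) = c)
    (l : List (Fin 2)) (h : l.length ≤ 1) :
    pre g (t, l) = (t, c :: l) := by
  subst hc; exact pre_of_short g t l h

lemma fin2_hcc : ∀ d : Fin 2, d + 1 + 1 = d := by decide
lemma fin2_ne : ∀ d : Fin 2, d ≠ d + 1 := by decide
lemma fin2_ne' : ∀ d : Fin 2, d + 1 ≠ d := by decide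
lemma fin2_dich : ∀ x d : Fin 2, d = x ∨ d + 1 = x := by decide

lemma braid_core (g : Fin 2) (t : ℕ) (c : Fin 2)
    (hA : g + (t : Fin 2) = c) (hB : g + 1 + (t : Fin 2) = c + 1)
    (hC : g + ((t + 1 : ℕ) : Fin 2) = c + 1) (hD : g + 1 + ((t + 1 : ℕ) : Fin 2) = c)
    (l : List (Fin 2)) (h : Av l) :
    pre g (pre (g + 1) (pre g (t, l))) = (t + 1, l) := by
  rcases l with _ | ⟨x, l⟩
  · rw [pre_short' hA [] (by simp), pre_short' hB [c] (by simp),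
      pre_hit' hA rfl rfl []]
  rcases fin2_dich x c with rfl | rfl
  · -- x = c
    rcases l with _ | ⟨y, l⟩
    · rw [pre_short' hA [c] (by simp),
        pre_miss' hB (fun hh => fin2_ne c hh.2) [],
        pre_hit' hA rfl rfl [c]]
    · rw [pre_miss' hA (fun hh => fin2_ne c hh.1) l,
        pre_miss' hB (fun hh => fin2_ne c hh.2) (y :: l),
        pre_hit' hA rfl rfl (c :: y :: l)]
  · -- x = c + 1
    rcases l with _ | ⟨y, l⟩
    · rw [pre_short' hA [c + 1] (by simp),
        pre_hit' hB (fin2_hcc c).symm rfl [],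
        pre_short' hC [] (by simp)]
    rcases fin2_dich y c with rfl | rfl
    · -- l₀ = (c+1) :: c :: l
      rw [pre_hit' hA rfl rfl l]
      rcases l with _ | ⟨u, l2⟩
      · rw [pre_short' hD [] (by simp), pre_short' hC [c] (by simp)]
      rcases fin2_dich u c with rfl | rfl
      · rcases l2 with _ | ⟨w, l3⟩
        · rw [pre_short' hD [c] (by simp),
            pre_miss' hC (fun hh => fin2_ne c hh.2) []]
        · rw [pre_miss' hD (fun hh => fin2_ne c hh.1) l3,
            pre_miss' hC (fun hh => fin2_ne c hh.2) (w :: l3)]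
      · -- Av contradiction: (c+1) :: c :: (c+1) :: l2
        exfalso
        rw [av_cons3] at h
        exact h.1 ⟨rfl, fin2_ne c⟩
    · -- l₀ = (c+1) :: (c+1) :: l
      rw [pre_miss' hA (fun hh => fin2_ne' c hh.2) l,
        pre_hit' hB (fin2_hcc c).symm rfl ((c + 1) :: l)]
      rcases l with _ | ⟨v, l3⟩
      · rw [pre_short' hC [c + 1] (by simp)]
      · rw [pre_miss' hC (fun hh => fin2_ne (c + 1) hh.1) l3]

lemma braid_gen (g : Fin 2) (t : ℕ) (l : List (Fin 2)) (h : Av l) :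
    pre g (pre (g + 1) (pre g (t, l))) = (t + 1, l) := by
  have h11 : (1 : Fin 2) + 1 = 0 := rfl
  refine braid_core g t (g + (t : Fin 2)) rfl (by ring) ?_ ?_ l h
  · push_cast; ring
  · push_cast
    calc g + 1 + ((t : Fin 2) + 1) = g + (t : Fin 2) + (1 + 1) := by ring
    _ = g + (t : Fin 2) := by rw [h11, add_zero]

/-- `pre` preserves pattern-avoidance -/
lemma pre_av (g : Fin 2) (t : ℕ) (l : List (Fin 2)) (h : Av l) :
    Av (pre g (t, l)).2 := by
  rcases l with _ | ⟨x, l⟩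
  · rw [pre_of_short g t [] (by simp)]; simp
  rcases l with _ | ⟨y, l⟩
  · rw [pre_of_short g t [x] (by simp)]; simp
  by_cases hxy : x = g + (t : Fin 2) + 1 ∧ y = g + (t : Fin 2)
  · rw [pre_hit' rfl hxy.1 hxy.2 l]
    exact av_tail (av_tail h)
  · rw [pre_miss' rfl hxy l]
    rw [av_cons3]
    refine ⟨?_, h⟩
    rintro ⟨rfl, hy⟩
    rcases fin2_dich x (g + (t : Fin 2)) with rfl | rfl
    · exact hy rfl
    · exact hxy ⟨rfl, rfl⟩

/-- normal form states -/
def NF : Type := {p : ℕ × List (Fin 2) // Av p.2}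

def preN (g : Fin 2) : NF → NF := fun n => ⟨pre g n.val, by
  have := pre_av g n.val.1 n.val.2 n.property
  simpa using this⟩

lemma preN_inj (g : Fin 2) : Function.Injective (preN g) := by
  rintro ⟨⟨t, l⟩, hl⟩ ⟨⟨t', l'⟩, hl'⟩ hEq
  have hv : pre g (t, l) = pre g (t', l') := congrArg Subtype.val hEq
  apply Subtype.ext
  show (t, l) = (t', l')
  -- case analysis on the two branches
  by_cases h1 : ∃ s, l = (g + (t : Fin 2) + 1) :: (g + (t : Fin 2)) :: s
  · obtain ⟨s, rfl⟩ := h1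
    rw [pre_hit' rfl rfl rfl s] at hv
    by_cases h2 : ∃ s', l' = (g + (t' : Fin 2) + 1) :: (g + (t' : Fin 2)) :: s'
    · obtain ⟨s', rfl⟩ := h2
      rw [pre_hit' rfl rfl rfl s'] at hv
      have ht : t = t' := by
        have := congrArg Prod.fst hv; simpa using this
      subst ht
      have hs : s = s' := by have := congrArg Prod.snd hv; simpa using this
      rw [hs]
    · -- l' branch is a miss: contradiction with Av
      exfalso
      have hm : pre g (t', l') = (t', (g + (t' : Fin 2)) :: l') := by
        rcases l' with _ | ⟨x', l'⟩
        · exact pre_of_short g t' [] (by simp)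
        rcases l' with _ | ⟨y', l''⟩
        · exact pre_of_short g t' [x'] (by simp)
        refine pre_miss' rfl ?_ l''
        intro hh
        exact h2 ⟨l'', by rw [hh.1, hh.2]⟩
      rw [hm] at hv
      -- hv : (t+1, s) = (t', c' :: l')
      have ht : t + 1 = t' := congrArg Prod.fst hv
      have hl2 : s = (g + (t' : Fin 2)) :: l' := congrArg Prod.snd hv
      -- then l = (c+1) :: c :: (c+1) :: l' violates Av
      subst ht
      have hc : g + ((t + 1 : ℕ) : Fin 2) = g + (t : Fin 2) + 1 := by push_cast; ring
      rw [hc] at hl2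
      rw [hl2, av_cons3] at hl
      exact hl.1 ⟨rfl, fin2_ne _⟩
  · by_cases h2 : ∃ s', l' = (g + (t' : Fin 2) + 1) :: (g + (t' : Fin 2)) :: s'
    · -- symmetric miss/hit
      exfalso
      obtain ⟨s', rfl⟩ := h2
      rw [pre_hit' rfl rfl rfl s'] at hv
      have hm : pre g (t, l) = (t, (g + (t : Fin 2)) :: l) := by
        rcases l with _ | ⟨x, l⟩
        · exact pre_of_short g t [] (by simp)
        rcases l with _ | ⟨y, l''⟩
        · exact pre_of_short g t [x] (by simp)
        refine pre_miss' rfl ?_ l''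
        intro hh
        exact h1 ⟨l'', by rw [hh.1, hh.2]⟩
      rw [hm] at hv
      have ht : t = t' + 1 := congrArg Prod.fst hv
      have hl2 : (g + (t : Fin 2)) :: l = s' := congrArg Prod.snd hv
      subst ht
      have hc : g + ((t' + 1 : ℕ) : Fin 2) = g + (t' : Fin 2) + 1 := by push_cast; ring
      rw [hc] at hl2
      rw [← hl2, av_cons3] at hl'
      exact hl'.1 ⟨rfl, fin2_ne _⟩
    · -- both miss
      have hm : pre g (t, l) = (t, (g + (t : Fin 2)) :: l) := by
        rcases l with _ | ⟨x, l⟩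
        · exact pre_of_short g t [] (by simp)
        rcases l with _ | ⟨y, l''⟩
        · exact pre_of_short g t [x] (by simp)
        refine pre_miss' rfl ?_ l''
        intro hh
        exact h1 ⟨l'', by rw [hh.1, hh.2]⟩
      have hm' : pre g (t', l') = (t', (g + (t' : Fin 2)) :: l') := by
        rcases l' with _ | ⟨x', l'2⟩
        · exact pre_of_short g t' [] (by simp)
        rcases l'2 with _ | ⟨y', l''⟩
        · exact pre_of_short g t' [x'] (by simp)
        refine pre_miss' rfl ?_ l''
        intro hh
        exact h2 ⟨l'', by rw [hh.1, hh.2]⟩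
      rw [hm, hm'] at hv
      have ht : t = t' := congrArg Prod.fst hv
      subst ht
      have := congrArg Prod.snd hv
      simp only at this
      rw [List.cons.injEq] at this
      rw [this.2]

/-- the action of `B3` on normal form states -/
def Φ : B3 →* Function.End NF :=
  (conGen braidRel).lift (FreeMonoid.lift (fun i => preN i))
    ((Con.conGen_le).2 (by
      rintro x y ⟨rfl, rfl⟩
      rw [Con.ker_rel]
      simp only [map_mul, FreeMonoid.lift_eval_of]
      have h0 : (0 : Fin 2) + 1 = 1 := rfl
      funext n
      obtain ⟨⟨t, l⟩, hl⟩ := n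
      show (preN 0 ∘ preN 1 ∘ preN 0) _ = (preN 1 ∘ preN 0 ∘ preN 1) _
      apply Subtype.ext
      show pre 0 (pre 1 (pre 0 (t, l))) = pre 1 (pre 0 (pre 1 (t, l)))
      have e1 := braid_gen 0 t l hl
      have e2 := braid_gen 1 t l hl
      rw [h0] at e1
      rw [show (1 : Fin 2) + 1 = 0 from rfl] at e2
      rw [e1, e2]))

@[simp] lemma Φ_σ (g : Fin 2) : Φ (σ g) = preN g := by
  show (conGen braidRel).lift _ _ ((conGen braidRel).mk' (FreeMonoid.of g)) = _
  rw [Con.lift_mk']; exact FreeMonoid.lift_eval_of _ _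

lemma Φ_inj (x : B3) : Function.Injective (Φ x) := by
  obtain ⟨l, rfl⟩ := repr x
  induction l with
  | nil => simp [dec]; exact fun a b hh => hh
  | cons g w ih =>
      rw [dec_cons, map_mul, Φ_σ]
      exact fun a b hh => ih (preN_inj g hh)

def decode : NF → B3 := fun n => Δ ^ n.val.1 * dec n.val.2

lemma decode_pre (g : Fin 2) (n : NF) : decode (preN g n) = σ g * decode n := by
  obtain ⟨⟨t, l⟩, hl⟩ := n
  show Δ ^ (pre g (t, l)).1 * dec (pre g (t, l)).2 = σ g * (Δ ^ t * dec l)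
  by_cases h1 : ∃ s, l = (g + (t : Fin 2) + 1) :: (g + (t : Fin 2)) :: s
  · obtain ⟨s, rfl⟩ := h1
    rw [pre_hit' rfl rfl rfl s]
    show Δ ^ (t + 1) * dec s = _
    rw [dec_cons, dec_cons, ← mul_assoc, ← mul_assoc, powComm g t, mul_assoc,
      mul_assoc, ← mul_assoc (σ (g + (t : Fin 2)))]
    rw [show σ (g + (t : Fin 2)) * σ (g + (t : Fin 2) + 1) * (σ (g + (t : Fin 2)) * dec s) =
        Δ * dec s from by rw [← mul_assoc, relc]]
    rw [pow_succ, mul_assoc]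
  · have hm : pre g (t, l) = (t, (g + (t : Fin 2)) :: l) := by
      rcases l with _ | ⟨x, l⟩
      · exact pre_of_short g t [] (by simp)
      rcases l with _ | ⟨y, l''⟩
      · exact pre_of_short g t [x] (by simp)
      refine pre_miss' rfl ?_ l''
      intro hh
      exact h1 ⟨l'', by rw [hh.1, hh.2]⟩
    rw [hm]
    show Δ ^ t * dec ((g + (t : Fin 2)) :: l) = _
    rw [dec_cons, ← mul_assoc, ← powComm, mul_assoc]

lemma decode_Φ (x : B3) (n : NF) : decode (Φ x n) = x * decode n := by
  obtain ⟨l, rfl⟩ := repr x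
  induction l with
  | nil => simp [dec]; rfl
  | cons g w ih =>
      rw [dec_cons, map_mul, Φ_σ]
      show decode (preN g (Φ (dec w) n)) = _
      rw [decode_pre, ih, mul_assoc]

def pt : NF := ⟨(0, []), av_nil⟩

lemma decode_eval (x : B3) : decode (Φ x pt) = x := by
  rw [decode_Φ]
  show x * (Δ ^ 0 * dec []) = x
  simp

lemma leftCancel (x u v : B3) (h : x * u = x * v) : u = v := by
  have h1 : Φ x (Φ u pt) = Φ x (Φ v pt) := by
    have := congrArg (fun z => Φ z pt) h
    simp only [map_mul, Function.End.mul_def] at this; exact this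
  have h2 := Φ_inj x h1
  calc u = decode (Φ u pt) := (decode_eval u).symm
  _ = decode (Φ v pt) := by rw [h2]
  _ = v := decode_eval v

/-- the reversal anti-automorphism -/
def ρ : B3 →* B3ᵐᵒᵖ :=
  (conGen braidRel).lift (FreeMonoid.lift (fun i => MulOpposite.op (σ i)))
    ((Con.conGen_le).2 (by
      rintro x y ⟨rfl, rfl⟩
      rw [Con.ker_rel]
      simp only [map_mul, FreeMonoid.lift_eval_of, ← MulOpposite.op_mul]
      rw [rel']))

def rv : B3 → B3 := fun x => (ρ x).unop

@[simp] lemma rv_σ (g : Fin 2) : rv (σ g) = σ g := by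
  have hh : ρ (σ g) = MulOpposite.op (σ g) := by
    show (conGen braidRel).lift _ _ ((conGen braidRel).mk' (FreeMonoid.of g)) = _
    rw [Con.lift_mk', FreeMonoid.lift_eval_of]
  simp [rv, hh]

lemma rv_mul (x y : B3) : rv (x * y) = rv y * rv x := by
  simp [rv, map_mul]

@[simp] lemma rv_one : rv 1 = 1 := by simp [rv]

lemma rv_rv (x : B3) : rv (rv x) = x := by
  obtain ⟨l, rfl⟩ := repr x
  induction l with
  | nil => simp
  | cons g w ih => rw [dec_cons, rv_mul, rv_mul, rv_σ, ih, rv_σ]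

lemma rightCancel (x u v : B3) (h : u * x = v * x) : u = v := by
  have h1 : rv x * rv u = rv x * rv v := by
    rw [← rv_mul, ← rv_mul, h]
  have h2 := leftCancel _ _ _ h1
  calc u = rv (rv u) := (rv_rv u).symm
  _ = rv (rv v) := by rw [h2]
  _ = v := rv_rv v

/-- length homomorphism -/
def L : B3 →* Multiplicative ℕ :=
  (conGen braidRel).lift (FreeMonoid.lift (fun _ => Multiplicative.ofAdd 1))
    ((Con.conGen_le).2 (by
      rintro x y ⟨rfl, rfl⟩
      rw [Con.ker_rel]
      simp [map_mul, FreeMonoid.lift_eval_of]))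

@[simp] lemma L_σ (g : Fin 2) : L (σ g) = Multiplicative.ofAdd 1 := by
  show (conGen braidRel).lift _ _ ((conGen braidRel).mk' (FreeMonoid.of g)) = _
  rw [Con.lift_mk', FreeMonoid.lift_eval_of]

/-- every element right-divides a power of Δ -/
lemma rdivΔ (u : B3) : ∃ p : B3, ∃ n : ℕ, p * u = Δ ^ n := by
  obtain ⟨l, rfl⟩ := repr u
  induction l with
  | nil => exact ⟨1, 0, by simp⟩
  | cons g w ih =>
      obtain ⟨p', n, hp⟩ := ih
      obtain ⟨wg, hwg⟩ : ∃ wg : B3, wg * σ g = Δ := by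
        fin_cases g
        · exact ⟨σ 0 * σ 1, rfl⟩
        · exact ⟨σ 1 * σ 0, rel.symm⟩
      refine ⟨τ p' * wg, n + 1, ?_⟩
      rw [dec_cons]
      calc τ p' * wg * (σ g * dec w) = τ p' * (wg * σ g) * dec w := by
            rw [mul_assoc, mul_assoc, mul_assoc]
      _ = τ p' * Δ * dec w := by rw [hwg]
      _ = Δ * p' * dec w := by rw [commτ (τ p'), ττ]
      _ = Δ * Δ ^ n := by rw [mul_assoc, hp]
      _ = Δ ^ (n + 1) := by rw [← pow_succ']

lemma commonLeftMul (u v : B3) : ∃ p q : B3, p * u = q * v := by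
  obtain ⟨p, n, hp⟩ := rdivΔ u
  obtain ⟨q, m, hq⟩ := rdivΔ v
  refine ⟨Δ ^ m * p, Δ ^ n * q, ?_⟩
  rw [mul_assoc, hp, mul_assoc, hq, ← pow_add, ← pow_add, Nat.add_comm]

end B3X

/-- `B(3)⁺` is cancellative, homogeneous with respect to `{a, b}`, any two elements
admit a common right multiple, and each generator left- and right-divides the
fundamental element `Δ = aba`. -/
theorem stmt_16 :
    (∀ x u v : B3, (x * u = x * v → u = v) ∧ (u * x = v * x → u = v)) ∧
    (∃ l : B3 → ℕ, l (σ 0) = 1 ∧ l (σ 1) = 1 ∧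
      ∀ x y : B3, l (x * y) = l x + l y) ∧
    (∀ u v : B3, ∃ p q : B3, p * u = q * v) ∧
    (∀ g : B3, g = σ 0 ∨ g = σ 1 →
      (∃ x : B3, σ 0 * σ 1 * σ 0 = g * x) ∧
      (∃ x : B3, σ 0 * σ 1 * σ 0 = x * g)) := by
  refine ⟨fun x u v => ⟨B3X.leftCancel x u v, B3X.rightCancel x u v⟩,
    ⟨fun z => Multiplicative.toAdd (B3X.L z), by simp, by simp, fun x y => by
      show Multiplicative.toAdd (B3X.L (x * y)) = _
      rw [map_mul]; rfl⟩,
    B3X.commonLeftMul, ?_⟩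
  rintro g (rfl | rfl)
  · exact ⟨⟨σ 1 * σ 0, by rw [mul_assoc]⟩, ⟨σ 0 * σ 1, rfl⟩⟩
  · refine ⟨⟨σ 0 * σ 1, ?_⟩, ⟨σ 1 * σ 0, ?_⟩⟩
    · rw [B3X.rel, mul_assoc]
    · rw [B3X.rel]
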